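/- Let V be a nonempty finite vocabulary, (K, μ) a probability space of watermark keys, and F a reweighting map sending a probability distribution P on V and a key k ∈ K to a probability distribution F(P,k) on V. Assume F is unbiased, i.e. for every probability distribution P on V and every v ∈ V, ∫_K F(P,k)(v) dμ(k) = P(v). Define the n-fold ensemble ENS_n recursively by ENS_1(P, k_1) = F(P, k_1) and ENS_n(P, k_{1:n}) = F(ENS_{n-1}(P, k_{1:n-1}), k_n). Then for every n ≥ 1, every probability distribution P on V, and every v ∈ V, the expectation of ENS_n(P, k_{1:n})(v) over k_{1:n} drawn i.i.d. from μ (i.e. with respect to the n-fold product measure μ^⊗n on K^n) equals P(v). -/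

import Mathlib

open MeasureTheory

/-- A probability distribution on a finite type `V`: nonnegative and sums to one. -/
def IsProbDist {V : Type*} [Fintype V] (P : V → ℝ) : Prop :=
  (∀ v, 0 ≤ P v) ∧ ∑ v, P v = 1

/-- The `n`-fold ensemble of a reweighting map `F`:
`ENS F 1 P k = F P k₁` and `ENS F n P k = F (ENS F (n-1) P k_{1:n-1}) kₙ`. -/
def ENS {V K : Type*} (F : (V → ℝ) → K → (V → ℝ)) :
    (n : ℕ) → (V → ℝ) → (Fin n → K) → (V → ℝ)
  | 0, P, _ => P
  | n + 1, P, k => F (ENS F n P (fun i : Fin n => k i.castSucc)) (k (Fin.last n))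

lemma ENS_probdist {V K : Type*} [Fintype V] (F : (V → ℝ) → K → (V → ℝ))
    (hFdist : ∀ P : V → ℝ, IsProbDist P → ∀ k : K, IsProbDist (F P k)) :
    ∀ (n : ℕ) (P : V → ℝ), IsProbDist P → ∀ k, IsProbDist (ENS F n P k)
  | 0, P, hP, _ => hP
  | n + 1, P, hP, k =>
    hFdist _ (ENS_probdist F hFdist n P hP _) _

lemma ENS_measurable {V K : Type*} [Fintype V] [MeasurableSpace K]
    (F : (V → ℝ) → K → (V → ℝ))
    (hFmeas : ∀ v : V, Measurable (fun pk : (V → ℝ) × K => F pk.1 pk.2 v)) :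
    ∀ (n : ℕ) (P : V → ℝ) (v : V), Measurable (fun k : Fin n → K => ENS F n P k v) := by
  intro n
  induction n with
  | zero => intro P v; exact measurable_const
  | succ n ih =>
    intro P v
    have h1 : Measurable (fun k : Fin (n+1) → K =>
        ((fun v' => ENS F n P (fun i : Fin n => k i.castSucc) v', k (Fin.last n)) :
          (V → ℝ) × K)) := by
      refine Measurable.prod ?_ (measurable_pi_apply _)
      refine measurable_pi_iff.2 fun v' => ?_
      exact (ih P v').comp (measurable_pi_iff.2 fun i => measurable_pi_apply _)
    exact (hFmeas v).comp h1

/-- **Unbiasedness of the ensemble.**  If `F` is an unbiased reweighting map with respect to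
the key measure `μ`, then for every `n ≥ 1`, every probability distribution `P` on `V` and
every token `v`, the expectation of `ENS F n P k v` over keys `k` drawn i.i.d. from `μ`
(i.e. with respect to the product measure `μ^⊗n` on `Fin n → K`) equals `P v`. -/
theorem ensemble_unbiased
    {V K : Type*} [Fintype V] [Nonempty V] [MeasurableSpace K]
    (μ : Measure K) [IsProbabilityMeasure μ]
    (F : (V → ℝ) → K → (V → ℝ))
    (hFmeas : ∀ v : V, Measurable (fun pk : (V → ℝ) × K => F pk.1 pk.2 v))
    (hFdist : ∀ P : V → ℝ, IsProbDist P → ∀ k : K, IsProbDist (F P k))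
    (hFunbiased : ∀ P : V → ℝ, IsProbDist P → ∀ v : V, ∫ k, F P k v ∂μ = P v)
    (n : ℕ) (hn : 1 ≤ n) (P : V → ℝ) (hP : IsProbDist P) (v : V) :
    ∫ k, ENS F n P k v ∂(Measure.pi fun _ : Fin n => μ) = P v := by
  clear hn
  induction n with
  | zero => simp [ENS]
  | succ n ih =>
    set e := MeasurableEquiv.piFinSuccAbove (fun _ : Fin (n+1) => K) (Fin.last n) with he
    have hpres := measurePreserving_piFinSuccAbove (fun _ : Fin (n+1) => μ) (Fin.last n)
    set g : K × (Fin n → K) → ℝ := fun p => F (ENS F n P p.2) p.1 v with hg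
    have hge : ∀ k : Fin (n+1) → K, ENS F (n+1) P k v = g (e k) := by
      intro k
      have hk : (Fin.last n).removeNth k = fun i : Fin n => k i.castSucc := by
        funext j
        show k ((Fin.last n).succAbove j) = k j.castSucc
        rw [Fin.succAbove_last]
      simp only [g, e, ENS, MeasurableEquiv.piFinSuccAbove, MeasurableEquiv.coe_mk,
        Fin.insertNthEquiv_symm_apply, Fin.insertNthEquiv, Equiv.coe_fn_symm_mk, hk]
    have hgmeas : Measurable g := by
      have h2 : Measurable (fun p : K × (Fin n → K) =>
          ((fun v' => ENS F n P p.2 v', p.1) : (V → ℝ) × K)) := by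
        refine Measurable.prod ?_ measurable_fst
        exact measurable_pi_iff.2 fun v' =>
          (ENS_measurable F hFmeas n P v').comp measurable_snd
      exact (hFmeas v).comp h2
    have hint : Integrable g (μ.prod (Measure.pi fun _ : Fin n => μ)) := by
      refine (integrable_const (1:ℝ)).mono' hgmeas.aestronglyMeasurable ?_
      refine Filter.Eventually.of_forall fun p => ?_
      have hd := hFdist _ (ENS_probdist F hFdist n P hP p.2) p.1
      have h0 : 0 ≤ g p := hd.1 v
      have h1 : g p ≤ 1 := by
        calc g p ≤ ∑ v', F (ENS F n P p.2) p.1 v' :=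
          Finset.single_le_sum (fun v' _ => hd.1 v') (Finset.mem_univ v)
        _ = 1 := hd.2
      rw [Real.norm_eq_abs, abs_of_nonneg h0]; exact h1
    calc ∫ k, ENS F (n+1) P k v ∂(Measure.pi fun _ : Fin (n+1) => μ)
        = ∫ k, g (e k) ∂(Measure.pi fun _ : Fin (n+1) => μ) := by
          exact integral_congr_ae (Filter.Eventually.of_forall hge)
      _ = ∫ p, g p ∂(μ.prod (Measure.pi fun _ : Fin n => μ)) :=
          hpres.integral_comp e.measurableEmbedding g
      _ = ∫ y, ∫ x, g (x, y) ∂μ ∂(Measure.pi fun _ : Fin n => μ) :=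
          integral_prod_symm g hint
      _ = ∫ y, ENS F n P y v ∂(Measure.pi fun _ : Fin n => μ) := by
          refine integral_congr_ae (Filter.Eventually.of_forall fun y => ?_)
          exact hFunbiased _ (ENS_probdist F hFdist n P hP y) v
      _ = P v := ih
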